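/- For every x ∈ (0,1), the derivative of the shifted weight satisfies (d/dx) W(x;a+1,b+1;d+1,c+2) = (c(c+1)d)/(a(c−b)) · ( W(x;a,b;c,d) − W(x;a,b+1;c+1,d) ). -/

import Mathlib

open MeasureTheory Filter

/-- Pochhammer symbol `(z)_n = z (z+1) ⋯ (z+n-1)`. -/
noncomputable def poch (z : ℝ) (n : ℕ) : ℝ := ∏ i ∈ Finset.range n, (z + i)

/-- Gauss hypergeometric series `₂F₁(α, β; γ; z)`. -/
noncomputable def twoF1 (α β γ z : ℝ) : ℝ :=
  ∑' n : ℕ, (poch α n * poch β n) / (poch γ n * n.factorial) * z ^ n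

/-- The weight function `W(x; a, b; c, d)`. -/
noncomputable def W (a b c d : ℝ) (x : ℝ) : ℝ :=
  (Real.Gamma c * Real.Gamma d) /
      (Real.Gamma a * Real.Gamma b * Real.Gamma (c + d - a - b)) *
    (x ^ (a - 1) * (1 - x) ^ (c + d - a - b - 1) *
      twoF1 (c - b) (d - b) (c + d - a - b) (1 - x))

noncomputable def hcf (α β γ : ℝ) (n : ℕ) : ℝ :=
  (poch α n * poch β n) / (poch γ n * n.factorial)

lemma twoF1_eq (α β γ z : ℝ) : twoF1 α β γ z = ∑' n, hcf α β γ n * z ^ n := rfl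

lemma poch_zero (z : ℝ) : poch z 0 = 1 := by simp [poch]

lemma hcf_zero (α β γ : ℝ) : hcf α β γ 0 = 1 := by simp [hcf, poch_zero]

lemma poch_succ (z : ℝ) (n : ℕ) : poch z (n + 1) = poch z n * (z + n) :=
  Finset.prod_range_succ _ _

lemma poch_succ' (z : ℝ) (n : ℕ) : poch z (n + 1) = z * poch (z + 1) n := by
  rw [poch, Finset.prod_range_succ']
  simp only [Nat.cast_zero, add_zero, poch]
  rw [mul_comm]
  congr 1
  refine Finset.prod_congr rfl fun i _ => ?_
  push_cast; ring

lemma poch_pos {z : ℝ} (hz : 0 < z) (n : ℕ) : 0 < poch z n :=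
  Finset.prod_pos fun i _ => by positivity

lemma hcf_pos {α β γ : ℝ} (hα : 0 < α) (hβ : 0 < β) (hγ : 0 < γ) (n : ℕ) :
    0 < hcf α β γ n := by
  have h1 := poch_pos hα n; have h2 := poch_pos hβ n; have h3 := poch_pos hγ n
  have h4 : (0:ℝ) < n.factorial := by positivity
  unfold hcf; positivity

lemma hcf_comm (α β γ : ℝ) (n : ℕ) : hcf α β γ n = hcf β α γ n := by
  unfold hcf; ring

lemma frac_tendsto (x y : ℝ) :
    Tendsto (fun n : ℕ => (x + n) / (y + n)) atTop (nhds 1) := by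
  have hev : ∀ᶠ n : ℕ in atTop, (x + n) / (y + n) = (x - y) * (y + (n : ℝ))⁻¹ + 1 := by
    filter_upwards [eventually_atTop.2 ⟨Nat.ceil (|y| + 1), fun n hn => hn⟩] with n hn
    have : (0:ℝ) < y + n := by
      have : (|y| + 1 : ℝ) ≤ n := le_trans (Nat.le_ceil _) (by exact_mod_cast hn)
      have := neg_abs_le y
      linarith
    rw [eq_comm]
    field_simp
    ring
  have h0 : Tendsto (fun n : ℕ => (y + (n : ℝ))⁻¹) atTop (nhds 0) :=
    Tendsto.inv_tendsto_atTop (tendsto_atTop_add_const_left _ y tendsto_natCast_atTop_atTop)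
  have := (h0.const_mul (x - y)).add (tendsto_const_nhds (x := (1:ℝ)))
  exact (Filter.tendsto_congr' hev).mpr (by simpa using this)

lemma ratio_tendsto (α β γ δ : ℝ) :
    Tendsto (fun n : ℕ => ((α + n) * (β + n)) / ((γ + n) * (δ + n)))
      atTop (nhds 1) := by
  have h := (frac_tendsto α γ).mul (frac_tendsto β δ)
  rw [show (1:ℝ) * 1 = 1 by ring] at h
  refine h.congr fun n => ?_
  rw [div_mul_div_comm]

/-- ratio of successive coefficientss -/
lemma hcf_succ (α β γ : ℝ) (hγ : 0 < γ) (n : ℕ) :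
    hcf α β γ (n + 1) = hcf α β γ n * (((α + n) * (β + n)) / ((γ + n) * ((n:ℝ) + 1))) := by
  have h3 := poch_pos hγ n
  have h4 : (0:ℝ) < n.factorial := by positivity
  have h5 : (0:ℝ) < γ + n := by positivity
  unfold hcf
  rw [poch_succ, poch_succ, poch_succ, Nat.factorial_succ]
  push_cast
  field_simp

lemma summable_pow (α β γ : ℝ) (hα : -1 < α) (hβ : 0 < β) (hγ : 0 < γ) {r : ℝ}
    (hr0 : 0 < r) (hr1 : r < 1) : Summable (fun n => hcf α β γ n * r ^ n) := by
  set r' := (1 + r) / 2 with hr'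
  have hr'1 : r' < 1 := by rw [hr']; linarith
  have hrr' : 1 < r' / r := by rw [lt_div_iff₀ hr0, hr']; linarith
  apply summable_of_ratio_norm_eventually_le hr'1
  have hev := (ratio_tendsto α β γ 1).eventually_le_const hrr'
  filter_upwards [hev, eventually_ge_atTop 1] with n hn hn1
  have hn1' : (1:ℝ) ≤ n := by exact_mod_cast hn1
  have hρ : 0 ≤ ((α + n) * (β + n)) / ((γ + n) * ((n:ℝ) + 1)) := by
    have : (0:ℝ) < α + n := by linarith
    have : (0:ℝ) < β + n := by positivity
    have : (0:ℝ) < γ + n := by positivity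
    positivity
  have key : hcf α β γ (n+1) * r ^ (n+1)
      = (hcf α β γ n * r ^ n) * ((((α + n) * (β + n)) / ((γ + n) * ((n:ℝ) + 1))) * r) := by
    rw [hcf_succ α β γ hγ n, pow_succ]; ring
  rw [key, norm_mul]
  have : ‖(((α + n) * (β + n)) / ((γ + n) * ((n:ℝ) + 1))) * r‖ ≤ r' := by
    rw [Real.norm_eq_abs, abs_of_nonneg (by positivity)]
    calc ((α + n) * (β + n)) / ((γ + n) * ((n:ℝ) + 1)) * r ≤ (r'/r) * r := by
          apply mul_le_mul_of_nonneg_right _ hr0.le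
          simpa [show (1:ℝ) + (n:ℝ) = (n:ℝ) + 1 by ring] using hn
      _ = r' := by field_simp
  calc ‖hcf α β γ n * r ^ n‖ * ‖((α + n) * (β + n)) / ((γ + n) * ((n:ℝ) + 1)) * r‖
      ≤ ‖hcf α β γ n * r ^ n‖ * r' := by
        exact mul_le_mul_of_nonneg_left this (norm_nonneg _)
    _ = r' * ‖hcf α β γ n * r ^ n‖ := by ring

lemma summable_deriv (α β γ : ℝ) (hα : 0 < α) (hβ : 0 < β) (hγ : 0 < γ) {r : ℝ}
    (hr0 : 0 < r) (hr1 : r < 1) :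
    Summable (fun n => hcf α β γ n * ((n:ℝ) * r ^ (n - 1))) := by
  set r' := (1 + r) / 2 with hr'
  have hr'1 : r' < 1 := by rw [hr']; linarith
  have hrr' : 1 < r' / r := by rw [lt_div_iff₀ hr0, hr']; linarith
  apply summable_of_ratio_norm_eventually_le hr'1
  have hev := (ratio_tendsto α β γ 0).eventually_le_const hrr'
  filter_upwards [hev, eventually_ge_atTop 1] with n hn hn1
  obtain ⟨m, rfl⟩ := Nat.exists_eq_add_of_le hn1
  have hρ : 0 ≤ ((α + (1+m)) * (β + (1+m))) / ((γ + (1+m)) * ((0:ℝ) + (1+m))) := by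
    have h1 : (0:ℝ) < α + (1+m) := by positivity
    have h2 : (0:ℝ) < β + (1+m) := by positivity
    have h3 : (0:ℝ) < γ + (1+m) := by positivity
    have h4 : (0:ℝ) < (0:ℝ) + (1+m) := by positivity
    positivity
  have key : hcf α β γ (1+m+1) * ((1+m+1:ℕ):ℝ) * r ^ (1+m+1-1)
      = (hcf α β γ (1+m) * (((1+m:ℕ)):ℝ) * r ^ (1+m-1))
        * (((α + (1+m:ℕ)) * (β + (1+m:ℕ))) / ((γ + (1+m:ℕ)) * ((0:ℝ) + (1+m:ℕ))) * r) := by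
    rw [hcf_succ α β γ hγ (1+m)]
    have e1 : 1+m+1-1 = (1+m-1) + 1 := by omega
    rw [e1, pow_succ]
    have h3 : (0:ℝ) < γ + (1+m:ℕ) := by positivity
    have h4 : ((1+m:ℕ):ℝ) ≠ 0 := by positivity
    field_simp
    push_cast
    ring
  have hcast : ∀ k : ℕ, hcf α β γ k * ((k:ℝ) * r ^ (k - 1))
      = hcf α β γ k * ((k:ℝ)) * r ^ (k-1) := fun k => by ring
  rw [hcast, hcast, key, norm_mul]
  have hb : ‖((α + (1+m:ℕ)) * (β + (1+m:ℕ))) / ((γ + (1+m:ℕ)) * ((0:ℝ) + (1+m:ℕ))) * r‖ ≤ r' := by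
    rw [Real.norm_eq_abs, abs_of_nonneg (by push_cast; push_cast at hρ; exact mul_nonneg hρ hr0.le)]
    calc ((α + (1+m:ℕ)) * (β + (1+m:ℕ))) / ((γ + (1+m:ℕ)) * ((0:ℝ) + (1+m:ℕ))) * r
        ≤ (r'/r) * r := by
          apply mul_le_mul_of_nonneg_right _ hr0.le
          push_cast
          push_cast at hn
          convert hn using 3 <;> ring
      _ = r' := by field_simp
  calc ‖hcf α β γ (1+m) * ((1+m:ℕ):ℝ) * r ^ (1+m-1)‖ * ‖_‖
      ≤ ‖hcf α β γ (1+m) * ((1+m:ℕ):ℝ) * r ^ (1+m-1)‖ * r' :=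
        mul_le_mul_of_nonneg_left hb (norm_nonneg _)
    _ = r' * ‖hcf α β γ (1+m) * ((1+m:ℕ):ℝ) * r ^ (1+m-1)‖ := by ring

lemma hasDerivAt_twoF1 (α β γ : ℝ) (hα : 0 < α) (hβ : 0 < β) (hγ : 0 < γ) {t : ℝ}
    (ht0 : 0 < t) (ht1 : t < 1) :
    HasDerivAt (twoF1 α β γ) (∑' n, hcf α β γ n * ((n:ℝ) * t ^ (n - 1))) t := by
  set r := (1 + t) / 2 with hr
  have hr0 : 0 < r := by rw [hr]; linarith
  have hr1 : r < 1 := by rw [hr]; linarith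
  have htr : t < r := by rw [hr]; linarith
  have hmem : t ∈ Set.Ioo (0:ℝ) r := ⟨ht0, htr⟩
  have H := hasDerivAt_tsum_of_isPreconnected
    (u := fun n => hcf α β γ n * ((n:ℝ) * r ^ (n - 1)))
    (g := fun (n : ℕ) (x : ℝ) => hcf α β γ n * x ^ n)
    (g' := fun (n : ℕ) (x : ℝ) => hcf α β γ n * ((n:ℝ) * x ^ (n - 1)))
    (summable_deriv α β γ hα hβ hγ hr0 hr1)
    (isOpen_Ioo (a := (0:ℝ)) (b := r))
    (isPreconnected_Ioo)
    (fun n x _ => (hasDerivAt_pow n x).const_mul _)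
    (fun n x hx => ?_) hmem (summable_pow α β γ (by linarith) hβ hγ ht0 ht1) hmem
  · exact H
  · have hx0 : 0 < x := hx.1
    have hxr : x ≤ r := hx.2.le
    have hcp := (hcf_pos hα hβ hγ n).le
    rw [Real.norm_eq_abs, abs_of_nonneg (by positivity)]
    have : x ^ (n-1) ≤ r ^ (n-1) := pow_le_pow_left₀ hx0.le hxr _
    have hn0 : (0:ℝ) ≤ (n:ℝ) := Nat.cast_nonneg n
    show hcf α β γ n * ((n:ℝ) * x ^ (n-1)) ≤ hcf α β γ n * ((n:ℝ) * r ^ (n-1))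
    have hxp : (0:ℝ) ≤ x ^ (n-1) := by positivity
    exact mul_le_mul_of_nonneg_left (mul_le_mul_of_nonneg_left this hn0) hcp

lemma coef_id (a b c d : ℝ) (hb : 0 < b) (hbc : b < c) (hbd : b < d)
    (hδ : 0 < c + d - a - b) (m : ℕ) :
    (a + (c+d-a-b) + m) * hcf (d-b) (c-b+1) (c+d-a-b+1) m
      - ((c+d-a-b) + ((m:ℝ)+1)) * hcf (d-b) (c-b+1) (c+d-a-b+1) (m+1)
    = ((c+d-a-b)/(c-b)) * (b * hcf (c-b) (d-b) (c+d-a-b) (m+1)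
        - c * hcf (c-b) (d-b-1) (c+d-a-b) (m+1)) := by
  have e1 : poch (d-b) (m+1) = poch (d-b) m * ((d-b)+m) := poch_succ _ _
  have e2 : poch (c-b+1) (m+1) = poch (c-b+1) m * ((c-b+1)+m) := poch_succ _ _
  have e3 : poch (c+d-a-b+1) (m+1) = poch (c+d-a-b+1) m * ((c+d-a-b+1)+m) := poch_succ _ _
  have e4 : poch (c-b) (m+1) = (c-b) * poch (c-b+1) m := poch_succ' _ _
  have e5 : poch (c+d-a-b) (m+1) = (c+d-a-b) * poch (c+d-a-b+1) m := poch_succ' _ _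
  have e6 : poch (d-b-1) (m+1) = (d-b-1) * poch (d-b) m := by
    have := poch_succ' (d-b-1) m
    rwa [show d - b - 1 + 1 = d - b by ring] at this
  have hP := poch_pos (show (0:ℝ) < d - b by linarith) m
  have hQ := poch_pos (show (0:ℝ) < c - b + 1 by linarith) m
  have hR := poch_pos (show (0:ℝ) < c + d - a - b + 1 by linarith) m
  have hM : (0:ℝ) < m.factorial := by positivity
  have hβ : (0:ℝ) < c - b := by linarith
  have hE : (0:ℝ) < c + d - a - b + 1 + m := by positivity
  unfold hcf
  rw [e1, e2, e3, e4, e5, e6, Nat.factorial_succ]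
  push_cast
  field_simp
  ring

lemma star (a b c d : ℝ) (ha : 0 < a) (hb : 0 < b) (hbc : b < c) (hbd : b < d)
    (hac : a < c) (had : a < d) {t : ℝ} (ht0 : 0 < t) (ht1 : t < 1) :
    a * t * twoF1 (d-b) (c-b+1) (c+d-a-b+1) t
      - (1-t) * ((c+d-a-b) * twoF1 (d-b) (c-b+1) (c+d-a-b+1) t
          + t * (∑' n, hcf (d-b) (c-b+1) (c+d-a-b+1) n * ((n:ℝ) * t ^ (n-1))))
    = ((c+d-a-b)/(c-b)) * (b * twoF1 (c-b) (d-b) (c+d-a-b) t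
        - c * twoF1 (c-b) (d-b-1) (c+d-a-b) t) := by
  set α := d - b with hαdef
  set β := c - b with hβdef
  set δ := c + d - a - b with hδdef
  have hα : 0 < α := by rw [hαdef]; linarith
  have hβ : 0 < β := by rw [hβdef]; linarith
  have hδ : 0 < δ := by rw [hδdef]; linarith
  set F1 := twoF1 α (β+1) (δ+1) t with hF1def
  set F0 := twoF1 β α δ t with hF0def
  set F2 := twoF1 β (α-1) δ t with hF2def
  set D := ∑' n, hcf α (β+1) (δ+1) n * ((n:ℝ) * t ^ (n-1)) with hDdef
  -- HasSum facts
  have hsF1 : HasSum (fun n => hcf α (β+1) (δ+1) n * t ^ n) F1 := by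
    rw [hF1def, twoF1_eq]
    exact (summable_pow α (β+1) (δ+1) (by linarith) (by linarith) (by linarith) ht0 ht1).hasSum
  have hsD : HasSum (fun n => hcf α (β+1) (δ+1) n * ((n:ℝ) * t ^ (n-1))) D := by
    rw [hDdef]
    exact (summable_deriv α (β+1) (δ+1) hα (by linarith) (by linarith) ht0 ht1).hasSum
  have hsF0 : HasSum (fun n => hcf β α δ n * t ^ n) F0 := by
    rw [hF0def, twoF1_eq]
    exact (summable_pow β α δ (by linarith) hα hδ ht0 ht1).hasSum
  have hsF2 : HasSum (fun n => hcf β (α-1) δ n * t ^ n) F2 := by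
    rw [hF2def, twoF1_eq]
    refine Summable.hasSum ?_
    exact ((summable_pow (α-1) β δ (by linarith) hβ hδ ht0 ht1).congr
      (fun n => by rw [hcf_comm]))
  set A : ℕ → ℝ := fun n => (a + δ + n) * hcf α (β+1) (δ+1) n * t ^ (n+1) with hAdef
  set B : ℕ → ℝ := fun n => (δ + n) * hcf α (β+1) (δ+1) n * t ^ n with hBdef
  set R : ℕ → ℝ := fun n => (δ/β) * (b * hcf β α δ n - c * hcf β (α-1) δ n) * t ^ n with hRdef
  have hsA : HasSum A (a*t*F1 + δ*t*F1 + t^2*D) := by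
    have h2 := ((hsF1.mul_left (a*t)).add (hsF1.mul_left (δ*t))).add (hsD.mul_left (t^2))
    have hAeq : A = fun n => ((a*t) * (hcf α (β+1) (δ+1) n * t ^ n)
        + (δ*t) * (hcf α (β+1) (δ+1) n * t ^ n))
        + (t^2) * (hcf α (β+1) (δ+1) n * ((n:ℝ) * t ^ (n-1))) := by
      funext n
      rw [hAdef]
      cases n with
      | zero => simp [pow_succ]; ring
      | succ m =>
        simp only [Nat.add_sub_cancel]
        push_cast
        ring
    rw [hAeq]
    exact h2
  have hsB : HasSum B (δ*F1 + t*D) := by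
    have h2 := (hsF1.mul_left δ).add (hsD.mul_left t)
    have hBeq : B = fun n => δ * (hcf α (β+1) (δ+1) n * t ^ n)
        + t * (hcf α (β+1) (δ+1) n * ((n:ℝ) * t ^ (n-1))) := by
      funext n
      rw [hBdef]
      cases n with
      | zero => simp
      | succ m =>
        simp only [Nat.add_sub_cancel]
        push_cast
        ring
    rw [hBeq]
    exact h2
  have hsR : HasSum R ((δ/β) * (b*F0 - c*F2)) := by
    have h2 := ((hsF0.mul_left b).sub (hsF2.mul_left c)).mul_left (δ/β)
    have hReq : R = fun n => (δ/β) * (b * (hcf β α δ n * t ^ n)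
        - c * (hcf β (α-1) δ n * t ^ n)) := by
      funext n; rw [hRdef]; ring
    rw [hReq]
    exact h2
  have hsA' : HasSum (fun n => if n = 0 then 0 else A (n-1)) (a*t*F1 + δ*t*F1 + t^2*D) := by
    refine (hasSum_nat_add_iff' 1).mp ?_
    simpa using hsA
  have hkey : ∀ n, (if n = 0 then 0 else A (n-1)) - B n = R n := by
    intro n
    cases n with
    | zero =>
      simp only [if_pos rfl, ↓reduceIte, hBdef, hRdef, hcf_zero, Nat.cast_zero]
      have hbc' : b - c = -β := by rw [hβdef]; ring
      field_simp
      rw [hβdef]; ring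
    | succ m =>
      simp only [Nat.succ_ne_zero, if_neg, Nat.add_sub_cancel, hAdef, hBdef, hRdef]
      have hco := coef_id a b c d hb hbc hbd (by rw [← hδdef]; exact hδ) m
      rw [← hαdef, ← hβdef, ← hδdef] at hco
      push_cast
      push_cast at hco
      linear_combination (t ^ (m+1)) * hco
  have hmain : (a*t*F1 + δ*t*F1 + t^2*D) - (δ*F1 + t*D) = (δ/β) * (b*F0 - c*F2) := by
    have h := (hsA'.sub hsB)
    have heq : (fun n => (if n = 0 then 0 else A (n-1)) - B n) = R := funext hkey
    rw [heq] at h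
    exact h.unique hsR
  linear_combination hmain

/-- Derivative of the shifted weight `W(x;a+1,b+1;d+1,c+2)`:
`(d/dx) W(x;a+1,b+1;d+1,c+2) = (c(c+1)d)/(a(c−b)) · (W(x;a,b;c,d) − W(x;a,b+1;c+1,d))`. -/
theorem deriv_shifted_weight_first (a b c d : ℝ)
    (ha : 0 < a) (hb : 0 < b) (hc : 0 < c) (hd : 0 < d)
    (hcd : max a b < min c d) :
    ∀ x ∈ Set.Ioo (0 : ℝ) 1,
      deriv (W (a + 1) (b + 1) (d + 1) (c + 2)) x =
        ((c * (c + 1) * d) / (a * (c - b))) *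
          (W a b c d x - W a (b + 1) (c + 1) d x) := by
  intro x hx
  obtain ⟨hx0, hx1⟩ := hx
  have hac : a < c := lt_of_lt_of_le (lt_of_le_of_lt (le_max_left a b) hcd) (min_le_left c d)
  have had : a < d := lt_of_lt_of_le (lt_of_le_of_lt (le_max_left a b) hcd) (min_le_right c d)
  have hbc : b < c := lt_of_lt_of_le (lt_of_le_of_lt (le_max_right a b) hcd) (min_le_left c d)
  have hbd : b < d := lt_of_lt_of_le (lt_of_le_of_lt (le_max_right a b) hcd) (min_le_right c d)
  have ht0 : 0 < 1 - x := by linarith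
  have ht1 : 1 - x < 1 := by linarith
  have hδ : 0 < c + d - a - b := by linarith
  -- rewrite the shifted weight
  have hWs : W (a+1) (b+1) (d+1) (c+2)
      = fun y => (Real.Gamma (d+1) * Real.Gamma (c+2)) /
          (Real.Gamma (a+1) * Real.Gamma (b+1) * Real.Gamma (c+d-a-b+1)) *
        (y ^ a * (1-y) ^ (c+d-a-b) * twoF1 (d-b) (c-b+1) (c+d-a-b+1) (1-y)) := by
    funext y
    show (Real.Gamma (d+1) * Real.Gamma (c+2)) /
        (Real.Gamma (a+1) * Real.Gamma (b+1) * Real.Gamma ((d+1)+(c+2)-(a+1)-(b+1))) *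
      (y ^ ((a+1)-1) * (1-y) ^ ((d+1)+(c+2)-(a+1)-(b+1)-1) *
        twoF1 ((d+1)-(b+1)) ((c+2)-(b+1)) ((d+1)+(c+2)-(a+1)-(b+1)) (1-y)) = _
    rw [show (d+1)+(c+2)-(a+1)-(b+1) = c+d-a-b+1 by ring, show (a+1)-1 = a by ring,
      show c+d-a-b+1-1 = c+d-a-b by ring, show (d+1)-(b+1) = d-b by ring,
      show (c+2)-(b+1) = c-b+1 by ring]
  set DD := ∑' n, hcf (d-b) (c-b+1) (c+d-a-b+1) n * ((n:ℝ) * (1-x) ^ (n-1)) with hDDdef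
  -- derivative pieces
  have h1 : HasDerivAt (fun y : ℝ => y ^ a) (a * x ^ (a-1)) x :=
    Real.hasDerivAt_rpow_const (Or.inl (ne_of_gt hx0))
  have hsub : HasDerivAt (fun y : ℝ => 1 - y) (-1) x := by
    simpa using ((hasDerivAt_id x).const_sub 1)
  have h2 : HasDerivAt (fun y : ℝ => (1-y) ^ (c+d-a-b))
      ((-1) * (c+d-a-b) * (1-x) ^ (c+d-a-b-1)) x :=
    hsub.rpow_const (Or.inl (ne_of_gt ht0))
  have h3 : HasDerivAt (fun y : ℝ => twoF1 (d-b) (c-b+1) (c+d-a-b+1) (1-y)) (DD * (-1)) x := by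
    have h := (hasDerivAt_twoF1 (d-b) (c-b+1) (c+d-a-b+1) (by linarith) (by linarith)
      (by linarith) ht0 ht1).comp x hsub
    rw [← hDDdef] at h
    exact h
  have hprod := (h1.mul h2).mul h3
  have hW : HasDerivAt (W (a+1) (b+1) (d+1) (c+2))
      ((Real.Gamma (d+1) * Real.Gamma (c+2)) /
          (Real.Gamma (a+1) * Real.Gamma (b+1) * Real.Gamma (c+d-a-b+1)) *
        ((a * x ^ (a-1) * (1-x) ^ (c+d-a-b)
            + x ^ a * ((-1) * (c+d-a-b) * (1-x) ^ (c+d-a-b-1)))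
            * twoF1 (d-b) (c-b+1) (c+d-a-b+1) (1-x)
          + x ^ a * (1-x) ^ (c+d-a-b) * (DD * (-1)))) x := by
    rw [hWs]
    exact hprod.const_mul _
  rw [hW.deriv]
  simp only [W]
  rw [show c+1+d-a-(b+1) = c+d-a-b by ring, show c+1-(b+1) = c-b by ring,
    show d-(b+1) = d-b-1 by ring]
  have hxa : x ^ a = x ^ (a-1) * x := by
    have := Real.rpow_add_one (ne_of_gt hx0) (a-1)
    rwa [show a-1+1 = a by ring] at this
  have hta : (1-x) ^ (c+d-a-b) = (1-x) ^ (c+d-a-b-1) * (1-x) := by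
    have := Real.rpow_add_one (ne_of_gt ht0) (c+d-a-b-1)
    rwa [show c+d-a-b-1+1 = c+d-a-b by ring] at this
  rw [hxa, hta]
  have hga : Real.Gamma (a+1) = a * Real.Gamma a := Real.Gamma_add_one (ne_of_gt ha)
  have hgb : Real.Gamma (b+1) = b * Real.Gamma b := Real.Gamma_add_one (ne_of_gt hb)
  have hgd : Real.Gamma (d+1) = d * Real.Gamma d := Real.Gamma_add_one (ne_of_gt hd)
  have hgδ : Real.Gamma (c+d-a-b+1) = (c+d-a-b) * Real.Gamma (c+d-a-b) :=
    Real.Gamma_add_one (ne_of_gt hδ)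
  have hgc1 : Real.Gamma (c+1) = c * Real.Gamma c := Real.Gamma_add_one (ne_of_gt hc)
  have hgc2 : Real.Gamma (c+2) = (c+1) * (c * Real.Gamma c) := by
    rw [show (c:ℝ)+2 = (c+1)+1 by ring, Real.Gamma_add_one (by positivity), hgc1]
  rw [hga, hgb, hgd, hgδ, hgc1, hgc2]
  have hst := star a b c d ha hb hbc hbd hac had ht0 ht1
  rw [← hDDdef] at hst
  have hΓa := Real.Gamma_pos_of_pos ha
  have hΓb := Real.Gamma_pos_of_pos hb
  have hΓδ := Real.Gamma_pos_of_pos hδ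
  have hβ : (0:ℝ) < c - b := by linarith
  linear_combination (norm := skip) (d * Real.Gamma d * ((c+1) * (c * Real.Gamma c))
      / (a * Real.Gamma a * (b * Real.Gamma b) * ((c+d-a-b) * Real.Gamma (c+d-a-b)))
      * (x ^ (a-1) * (1-x) ^ (c+d-a-b-1))) * hst
  field_simp
  ring
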